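/- Let ρ > 0 and let a be a nonzero quaternion with |a| < ρ. The punctual ρ-Blaschke factor B(x) = (ρ² − x·aᶜ)·(ρ(x − a))⁻¹ satisfies: |B(x)| < 1 for every quaternion x with |x| > ρ, and |B(x)| > 1 for every quaternion x with |x| < ρ and x ≠ a. -/

import Mathlib

open Quaternion RealInnerProductSpace

lemma key_norm_sq (ρ : ℝ) (hρ : 0 < ρ) (x a : Quaternion ℝ) :
    ‖(((ρ^2 : ℝ) : Quaternion ℝ) - x * star a)‖^2
      = (ρ * ‖x - a‖)^2 + (ρ^2 - ‖x‖^2) * (ρ^2 - ‖a‖^2) := by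
  have h1 : ‖(((ρ^2 : ℝ) : Quaternion ℝ) - x * star a)‖^2
      = ‖(((ρ^2 : ℝ) : Quaternion ℝ))‖^2 - 2 * (inner ℝ (((ρ^2 : ℝ) : Quaternion ℝ)) (x * star a) : ℝ)
        + ‖x * star a‖^2 := by
    rw [@norm_sub_sq_real]
  have h2 : ‖x - a‖^2 = ‖x‖^2 - 2 * (inner ℝ x a : ℝ) + ‖a‖^2 := by rw [@norm_sub_sq_real]
  have hi1 : (inner ℝ (((ρ^2 : ℝ) : Quaternion ℝ)) (x * star a) : ℝ) = ρ^2 * (inner ℝ x a : ℝ) := by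
    simp [Quaternion.inner_def, ← Quaternion.coe_pow, Quaternion.re_mul, Quaternion.re_coe,
      Quaternion.imI_coe, Quaternion.imJ_coe, Quaternion.imK_coe]
    exact Or.inl (by ring)
  have hn1 : ‖(((ρ^2 : ℝ) : Quaternion ℝ))‖ = ρ^2 := by
    rw [Quaternion.norm_coe]; exact abs_of_nonneg (sq_nonneg ρ)
  have hn2 : ‖x * star a‖ = ‖x‖ * ‖a‖ := by rw [norm_mul, Quaternion.norm_star]
  rw [h1, hi1, hn1, hn2]
  rw [show (ρ * ‖x - a‖)^2 = ρ^2 * ‖x - a‖^2 by ring, h2]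
  ring

theorem punctual_blaschke_norm_inside_outside (ρ : ℝ) (hρ : 0 < ρ)
    (a : Quaternion ℝ) (ha0 : a ≠ 0) (ha : ‖a‖ < ρ) :
    (∀ x : Quaternion ℝ, ρ < ‖x‖ →
      ‖(((ρ^2 : ℝ) : Quaternion ℝ) - x * star a) * ((ρ : ℝ) • (x - a))⁻¹‖ < 1) ∧
    (∀ x : Quaternion ℝ, ‖x‖ < ρ → x ≠ a →
      1 < ‖(((ρ^2 : ℝ) : Quaternion ℝ) - x * star a) * ((ρ : ℝ) • (x - a))⁻¹‖) := by
  have hnorm : ∀ x : Quaternion ℝ, x ≠ a →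
      ‖(((ρ^2 : ℝ) : Quaternion ℝ) - x * star a) * ((ρ : ℝ) • (x - a))⁻¹‖
        = ‖(((ρ^2 : ℝ) : Quaternion ℝ) - x * star a)‖ / (ρ * ‖x - a‖) := by
    intro x hx
    rw [norm_mul, norm_inv, norm_smul, Real.norm_eq_abs, abs_of_pos hρ, div_eq_mul_inv]
  have hxa_pos : ∀ x : Quaternion ℝ, x ≠ a → 0 < ρ * ‖x - a‖ := by
    intro x hx
    exact mul_pos hρ (norm_pos_iff.mpr (sub_ne_zero.mpr hx))
  constructor
  · intro x hx
    have hxa : x ≠ a := by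
      intro h; rw [h] at hx; linarith
    rw [hnorm x hxa, div_lt_one (hxa_pos x hxa)]
    have hkey := key_norm_sq ρ hρ x a
    have h2 : (ρ^2 - ‖x‖^2) * (ρ^2 - ‖a‖^2) < 0 := by
      apply mul_neg_of_neg_of_pos
      · nlinarith
      · nlinarith [norm_nonneg a]
    nlinarith [norm_nonneg (((ρ^2 : ℝ) : Quaternion ℝ) - x * star a), hxa_pos x hxa]
  · intro x hx hxa
    rw [hnorm x hxa, lt_div_iff₀ (hxa_pos x hxa), one_mul]
    have hkey := key_norm_sq ρ hρ x a
    have h2 : 0 < (ρ^2 - ‖x‖^2) * (ρ^2 - ‖a‖^2) := by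
      apply mul_pos
      · nlinarith [norm_nonneg x]
      · nlinarith [norm_nonneg a]
    nlinarith [norm_nonneg (((ρ^2 : ℝ) : Quaternion ℝ) - x * star a), hxa_pos x hxa]
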